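/- Let R be a commutative ring, A ∈ R^{m×n}, b ∈ R^{1×n}, and let L ∈ R^{o×(m+1)} be a matrix whose rows generate all row syzygies of the (m+1) × n matrix obtained by stacking b on top of A. Write the i-th row of L as (rᵢ | Lᵢ) with rᵢ ∈ R and Lᵢ ∈ R^{1×m}. Then dom_R([b]_A) = { r | ∃ x, x·A = r·b } is the ideal generated by r₁, …, r_o. -/

import Mathlib

open Matrix

theorem stmt_7 {R : Type*} [CommRing R] {m n o : ℕ}
    (A : Matrix (Fin m) (Fin n) R) (b : Fin n → R)
    (L : Matrix (Fin o) (Fin (m + 1)) R)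
    (stack : Matrix (Fin (m + 1)) (Fin n) R)
    (hstack : stack = Matrix.of (Fin.cases b A))
    (hLstack : L * stack = 0)
    (hgen : ∀ T : Fin (m + 1) → R, T ᵥ* stack = 0 →
      ∃ U : Fin o → R, U ᵥ* L = T) :
    {r : R | ∃ x : Fin m → R, x ᵥ* A = r • b} =
      (Ideal.span (Set.range fun i => L i 0) : Set R) := by
  ext r
  simp only [Set.mem_setOf_eq, SetLike.mem_coe]
  constructor
  · rintro ⟨x, hx⟩
    set T : Fin (m + 1) → R := Fin.cases r (fun i => -x i) with hT
    have hT0 : T ᵥ* stack = 0 := by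
      funext j
      have hxj : ∑ i, x i * A i j = r * b j := by
        have := congrFun hx j
        simpa [vecMul, dotProduct] using this
      have h0 : stack 0 j = b j := by rw [hstack]; rfl
      have hs : ∀ k : Fin m, stack k.succ j = A k j := by intro k; rw [hstack]; rfl
      simp [vecMul, dotProduct, h0, hs, Fin.sum_univ_succ, hT, hxj]
    obtain ⟨U, hU⟩ := hgen T hT0
    have : r = ∑ i, U i * L i 0 := by
      have := congrFun hU 0
      simpa [vecMul, dotProduct, hT] using this.symm
    rw [this]
    exact Ideal.sum_mem _ fun i _ => Ideal.mul_mem_left _ _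
      (Ideal.subset_span ⟨i, rfl⟩)
  · intro hr
    have hI : ∀ i : Fin o, ∃ x : Fin m → R, x ᵥ* A = (L i 0) • b := by
      intro i
      refine ⟨fun k => -L i k.succ, ?_⟩
      funext j
      have := congrFun (congrFun hLstack i) j
      simp only [Matrix.mul_apply, Matrix.zero_apply, Fin.sum_univ_succ] at this
      have : ∑ k : Fin m, L i (Fin.succ k) * stack (Fin.succ k) j = -(L i 0 * stack 0 j) := by
        linear_combination this
      have h0 : stack 0 j = b j := by rw [hstack]; rfl
      have hs : ∀ k : Fin m, stack k.succ j = A k j := by intro k; rw [hstack]; rfl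
      simp [vecMul, dotProduct, h0, hs, Finset.sum_neg_distrib] at this ⊢
      rw [show ∀ a b : R, -a = b ↔ a = -b from fun a b => neg_eq_iff_eq_neg]
      rw [← this]
    refine Submodule.span_induction ?_ ⟨0, by simp⟩ ?_ ?_ hr
    · rintro s ⟨i, rfl⟩
      exact hI i
    · rintro a b - - ⟨x, hx⟩ ⟨y, hy⟩
      exact ⟨x + y, by simp [Matrix.add_vecMul, hx, hy, add_smul]⟩
    · rintro a s - ⟨x, hx⟩
      exact ⟨a • x, by simp [Matrix.smul_vecMul, hx, smul_smul]⟩
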